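/- Let G be a group, n ≥ 3, and let a, b ∈ End F_n(G). Then a R b (i.e., the principal right ideals of a and b in the monoid End F_n(G) coincide) if and only if ker a = ker b, where ker a denotes the kernel congruence {(x,y) ∈ F_n(G) × F_n(G) : xa = ya}. -/

import Mathlib

/-- An endomorphism of the rank-`n` free left `G`-act `F_n(G) = G × Fin n`
(the formal symbols `g x_i` are the pairs `(g, i)`), where the action is
`h • (g, i) = (h * g, i)` and equivariance says `(h • x) a = h • (x a)`. -/
structure ActEnd (G : Type*) [Group G] (n : ℕ) : Type _ where
  toFun : G × Fin n → G × Fin n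
  equivariant : ∀ (h : G) (x : G × Fin n),
    toFun (h * x.1, x.2) = (h * (toFun x).1, (toFun x).2)

namespace ActEnd

variable {G : Type*} [Group G] {n : ℕ}

/-- Composition is written left-to-right: `x (a * b) = (x a) b`. -/
instance : Monoid (ActEnd G n) where
  mul a b := ⟨fun x => b.toFun (a.toFun x), by
    intro h x
    try dsimp only
    rw [a.equivariant h x, b.equivariant]⟩
  one := ⟨id, fun _ _ => rfl⟩
  mul_assoc _ _ _ := rfl
  one_mul _ := rfl
  mul_one _ := rfl

@[simp] theorem mul_toFun (a b : ActEnd G n) (x : G × Fin n) :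
    (a * b).toFun x = b.toFun (a.toFun x) := rfl

theorem ext' {a b : ActEnd G n} (h : a.toFun = b.toFun) : a = b := by
  cases a; cases b; cases h; rfl

/-- The rank of an endomorphism of `F_n(G)`: the number of indices `j` such
that `G x_j` meets the image. -/
noncomputable def rank (a : ActEnd G n) : ℕ :=
  Nat.card {j : Fin n // ∃ x, (a.toFun x).2 = j}

end ActEnd

/-- The principal left ideal `M a` of `a`. -/
def lIdeal {M : Type*} [Monoid M] (a : M) : Set M := Set.range fun m => m * a

/-- The principal right ideal `a M` of `a`. -/
def rIdeal {M : Type*} [Monoid M] (a : M) : Set M := Set.range fun m => a * m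

/-- The `H`-class of `e`: all elements that are both `L`- and `R`-related to `e`. -/
def hClass {M : Type*} [Monoid M] (e : M) : Set M :=
  {a | lIdeal a = lIdeal e ∧ rIdeal a = rIdeal e}

/-- In `End F_n(G)` (for `n ≥ 3`), two endomorphisms are `R`-related (their
principal right ideals coincide) if and only if they have the same kernel
congruence. -/
theorem stmt1 {G : Type*} [Group G] {n : ℕ} (hn : 3 ≤ n) (a b : ActEnd G n) :
    rIdeal a = rIdeal b ↔
      ∀ x y : G × Fin n, (a.toFun x = a.toFun y ↔ b.toFun x = b.toFun y) := by
  classical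
  have key : ∀ (a b : ActEnd G n),
      (∀ x y, a.toFun x = a.toFun y → b.toFun x = b.toFun y) →
      ∃ c, a * c = b := by
    intro a b hker
    set u : Fin n → G := fun j =>
      if h : ∃ x, (a.toFun x).2 = j then
        ((a.toFun h.choose).1)⁻¹ * (b.toFun h.choose).1 else 1 with hu
    set k : Fin n → Fin n := fun j =>
      if h : ∃ x, (a.toFun x).2 = j then (b.toFun h.choose).2 else j with hk
    refine ⟨⟨fun p => (p.1 * u p.2, k p.2), by intro h x; simp [mul_assoc]⟩, ?_⟩
    apply ActEnd.ext'
    funext y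
    have hj : ∃ x, (a.toFun x).2 = (a.toFun y).2 := ⟨y, rfl⟩
    have hx2 : (a.toFun hj.choose).2 = (a.toFun y).2 := hj.choose_spec
    set x := hj.choose with hxdef
    have haeq : a.toFun ((a.toFun y).1 * ((a.toFun x).1)⁻¹ * x.1, x.2) = a.toFun y := by
      rw [a.equivariant]
      refine Prod.ext ?_ hx2
      simp [mul_assoc]
    have hbeq := hker _ _ haeq
    rw [b.equivariant] at hbeq
    show ((a.toFun y).1 * u (a.toFun y).2, k (a.toFun y).2) = b.toFun y
    have hu' : u (a.toFun y).2 = ((a.toFun x).1)⁻¹ * (b.toFun x).1 := by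
      rw [hu]; exact dif_pos hj
    have hk' : k (a.toFun y).2 = (b.toFun x).2 := by
      rw [hk]; exact dif_pos hj
    rw [hu', hk', ← hbeq]
    refine Prod.ext ?_ rfl
    simp [mul_assoc]
  constructor
  · intro h x y
    have hb : b ∈ rIdeal a := by rw [h]; exact ⟨1, mul_one b⟩
    have ha : a ∈ rIdeal b := by rw [← h]; exact ⟨1, mul_one a⟩
    obtain ⟨c, hc'⟩ := hb
    obtain ⟨d, hd'⟩ := ha
    have hc : a * c = b := hc'
    have hd : b * d = a := hd'
    constructor
    · intro hxy
      have : (a * c).toFun x = (a * c).toFun y := by simp [hxy]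
      rwa [hc] at this
    · intro hxy
      have : (b * d).toFun x = (b * d).toFun y := by simp [hxy]
      rwa [hd] at this
  · intro h
    obtain ⟨c, hc⟩ := key a b (fun x y hxy => (h x y).1 hxy)
    obtain ⟨d, hd⟩ := key b a (fun x y hxy => (h x y).2 hxy)
    apply Set.eq_of_subset_of_subset
    · rintro z ⟨m, rfl⟩
      exact ⟨d * m, show b * (d * m) = a * m by rw [← mul_assoc, hd]⟩
    · rintro z ⟨m, rfl⟩
      exact ⟨c * m, show a * (c * m) = b * m by rw [← mul_assoc, hc]⟩
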